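/- arXiv:2412.08552 — 2 statements merged into one kernel-verified Lean document; each statement's English description precedes it below -/
import Mathlib

section
/- Let p, q, a, b be complex numbers with positive real parts (in particular one may take a, b positive reals). Then for every complex z with |z| < 1, Φ_{p,q}(a,b;z) = ((1+a)^p (1+b)^q / (Γ(p) Γ(q))) ∫_0^1 ∫_0^1 z (log(1/u))^{p−1} (log(1/v))^{q−1} u^a v^b / (1 − u v z) du dv. -/
open MeasureTheory

/-- The generalized polylogarithm `Φ_{p,q}(a,b;z)` with complex parameters. -/
noncomputable def genPolylogC (p q a b z : ℂ) : ℂ :=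
  ∑' k : ℕ, ((1 + a) ^ p * (1 + b) ^ q /
      (((k : ℂ) + 1 + a) ^ p * ((k : ℂ) + 1 + b) ^ q)) * z ^ (k + 1)

open Set Complex

lemma aux_asm {p : ℂ} (c : ℂ) :
    AEStronglyMeasurable (fun t : ℝ => (t : ℂ) ^ (p - 1) * Complex.exp (-(c * t)))
      (volume.restrict (Ioi 0)) := by
  refine (ContinuousOn.mul (fun t ht => ?_) (Continuous.continuousOn (by continuity))).aestronglyMeasurable measurableSet_Ioi
  exact (continuousAt_ofReal_cpow_const t (p - 1) (Or.inr (ne_of_gt ht))).continuousWithinAt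

lemma aux_norm {p : ℂ} (c : ℂ) {t : ℝ} (ht : 0 < t) :
    ‖(t : ℂ) ^ (p - 1) * Complex.exp (-(c * t))‖ = t ^ (p.re - 1) * Real.exp (-(c.re * t)) := by
  rw [norm_mul, Complex.norm_exp,
    Complex.norm_cpow_eq_rpow_re_of_pos ht]
  rw [Complex.sub_re, Complex.one_re]
  congr 1
  simp [Complex.mul_re]

lemma aux_integrable_rw {s b : ℝ} (hs : -1 < s) (hb : 0 < b) :
    IntegrableOn (fun t : ℝ => t ^ s * Real.exp (-(b * t))) (Ioi 0) := by
  have := integrableOn_rpow_mul_exp_neg_mul_rpow (p := 1) hs zero_lt_one hb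
  refine this.congr_fun (fun x hx => ?_) measurableSet_Ioi
  simp only [Real.rpow_one, neg_mul]

lemma laplace_integrable {p c : ℂ} (hp : 0 < p.re) (hc : 0 < c.re) :
    IntegrableOn (fun t : ℝ => (t : ℂ) ^ (p - 1) * Complex.exp (-(c * t))) (Ioi 0) := by
  refine Integrable.mono' (aux_integrable_rw (s := p.re - 1) (b := c.re) (by linarith) hc) (aux_asm c) ?_
  filter_upwards [ae_restrict_mem measurableSet_Ioi] with t ht
  rw [aux_norm c ht]

lemma laplace_integral_gamma {p : ℂ} (hp : 0 < p.re) {c : ℂ} (hc : 0 < c.re) :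
    ∫ t in Ioi (0:ℝ), (t : ℂ) ^ (p - 1) * Complex.exp (-(c * t)) = (1 / c) ^ p * Complex.Gamma p := by
  set U : Set ℂ := {c : ℂ | 0 < c.re} with hU
  have hUopen : IsOpen U := isOpen_lt continuous_const Complex.continuous_re
  set f : ℂ → ℂ := fun c => ∫ t in Ioi (0:ℝ), (t : ℂ) ^ (p - 1) * Complex.exp (-(c * t)) with hf
  set g : ℂ → ℂ := fun c => (1 / c) ^ p * Complex.Gamma p with hg
  have hdf : DifferentiableOn ℂ f U := by
    intro c₀ hc₀
    have hc₀re : 0 < c₀.re := hc₀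
    set ε : ℝ := c₀.re / 2 with hε
    have hεpos : 0 < ε := by positivity
    have key := hasDerivAt_integral_of_dominated_loc_of_deriv_le (μ := volume.restrict (Ioi 0))
      (F := fun c (t : ℝ) => (t : ℂ) ^ (p - 1) * Complex.exp (-(c * t)))
      (F' := fun c (t : ℝ) => (t : ℂ) ^ (p - 1) * (Complex.exp (-(c * t)) * (-(t : ℂ))))
      (x₀ := c₀) (bound := fun t : ℝ => t ^ p.re * Real.exp (-(ε * t))) (Metric.ball_mem_nhds c₀ hεpos)
      (Filter.Eventually.of_forall fun c => aux_asm c) (laplace_integrable hp hc₀re)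
      ?_ ?_ (aux_integrable_rw (by linarith) hεpos) ?_
    · exact (key.2.differentiableAt).differentiableWithinAt
    · refine (ContinuousOn.mul (fun t ht => (continuousAt_ofReal_cpow_const t (p - 1)
        (Or.inr (ne_of_gt ht))).continuousWithinAt)
        (Continuous.continuousOn (by continuity))).aestronglyMeasurable measurableSet_Ioi
    · filter_upwards [ae_restrict_mem measurableSet_Ioi] with t ht c hcball
      have hcre : ε ≤ c.re := by
        have h1 : |(c - c₀).re| ≤ ‖c - c₀‖ := Complex.abs_re_le_norm _
        have h2 : ‖c - c₀‖ < ε := by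
          rwa [Metric.mem_ball, Complex.dist_eq] at hcball
        have := abs_le.1 h1
        simp only [Complex.sub_re] at this
        have : c₀.re - c.re ≤ ε := by linarith [this.1, h2.le]
        simp only [hε] at *; linarith
      rw [norm_mul, norm_mul,
        Complex.norm_cpow_eq_rpow_re_of_pos ht, Complex.norm_exp]
      have h3 : (-(c * (t:ℂ))).re = -(c.re * t) := by simp [Complex.mul_re]
      rw [h3, Complex.sub_re, Complex.one_re]
      have h4 : ‖-(t : ℂ)‖ = t := by
        rw [norm_neg, Complex.norm_real, Real.norm_eq_abs, abs_of_pos ht]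
      rw [h4]
      rw [show t ^ (p.re - 1) * (Real.exp (-(c.re * t)) * t)
          = t ^ (p.re - 1) * t * Real.exp (-(c.re * t)) by ring,
        ← Real.rpow_add_one (ne_of_gt ht), sub_add_cancel]
      have : Real.exp (-(c.re * t)) ≤ Real.exp (-(ε * t)) := by
        apply Real.exp_le_exp.2
        have ht0 : (0:ℝ) < t := ht
        nlinarith
      have ht0 : (0:ℝ) < t := ht
      have ht' : (0:ℝ) ≤ t ^ p.re := Real.rpow_nonneg ht0.le _
      nlinarith [Real.exp_pos (-(c.re * t)), Real.exp_pos (-(ε * t))]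
    · filter_upwards [ae_restrict_mem measurableSet_Ioi] with t ht c _
      have h1 : HasDerivAt (fun c : ℂ => -(c * (t:ℂ))) (-(t:ℂ)) c := by
        have := ((hasDerivAt_id' c).mul_const (t:ℂ)).neg; rw [one_mul] at this; exact this
      have h2 := h1.cexp
      exact (h2.const_mul ((t:ℂ) ^ (p - 1)))
  have hdg : DifferentiableOn ℂ g U := by
    intro c hc
    have hcne : c ≠ 0 := by intro h; rw [hU] at hc; simp [h] at hc
    refine DifferentiableAt.differentiableWithinAt ?_
    refine DifferentiableAt.mul_const ?_ _
    refine DifferentiableAt.cpow ((differentiableAt_const 1).div differentiableAt_id hcne)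
      (differentiableAt_const p) ?_
    rw [Complex.mem_slitPlane_iff]
    left
    rw [one_div, Complex.inv_re]
    exact div_pos hc (Complex.normSq_pos.2 hcne)
  have heq : EqOn f g U := by
    refine AnalyticOnNhd.eqOn_of_preconnected_of_frequently_eq
      (hdf.analyticOnNhd hUopen) (hdg.analyticOnNhd hUopen)
      ((convex_halfSpace_re_gt 0).isPreconnected) (show (1:ℂ) ∈ U by simp [hU]) ?_
    have h1 : Filter.Tendsto (fun n : ℕ => ((1 + ((n:ℝ)+1)⁻¹ : ℝ) : ℂ)) Filter.atTop (nhdsWithin 1 {(1:ℂ)}ᶜ) := by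
      rw [tendsto_nhdsWithin_iff]
      constructor
      · have : Filter.Tendsto (fun n : ℕ => (1 + ((n:ℝ)+1)⁻¹ : ℝ)) Filter.atTop (nhds 1) := by
          have := tendsto_one_div_add_atTop_nhds_zero_nat (𝕜 := ℝ)
          simp only [one_div] at this
          simpa using Filter.Tendsto.const_add 1 (this.comp (Filter.tendsto_id))
        have h2 : Filter.Tendsto (fun x : ℝ => (x : ℂ)) (nhds 1) (nhds 1) := by
          have := Complex.continuous_ofReal.tendsto (1:ℝ)
          simpa using this
        exact h2.comp this
      · filter_upwards with n
        simp only [Set.mem_compl_iff, Set.mem_singleton_iff]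
        intro h
        have : (1 + ((n:ℝ)+1)⁻¹ : ℝ) = 1 := by exact_mod_cast h
        have hpos : (0:ℝ) < ((n:ℝ)+1)⁻¹ := by positivity
        linarith
    refine h1.frequently (Filter.Eventually.frequently (Filter.Eventually.of_forall fun n => ?_))
    have hrpos : (0:ℝ) < 1 + ((n:ℝ)+1)⁻¹ := by positivity
    exact Complex.integral_cpow_mul_exp_neg_mul_Ioi hp hrpos
  exact heq hc

lemma image_exp_neg : (fun t : ℝ => Real.exp (-t)) '' (Ioi 0) = Ioo (0:ℝ) 1 := by
  ext x
  constructor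
  · rintro ⟨t, ht, rfl⟩
    refine ⟨Real.exp_pos _, ?_⟩
    rw [Real.exp_lt_one_iff]
    simp only [mem_Ioi] at ht
    linarith
  · intro hx
    refine ⟨-Real.log x, ?_, by simp [Real.exp_log hx.1]⟩
    simp only [mem_Ioi, neg_pos]
    exact Real.log_neg hx.1 hx.2

lemma hasDerivWithin_exp_neg : ∀ t ∈ Ioi (0:ℝ),
    HasDerivWithinAt (fun t : ℝ => Real.exp (-t)) (-Real.exp (-t)) (Ioi 0) t := by
  intro t _
  have : HasDerivAt (fun t : ℝ => Real.exp (-t)) (-Real.exp (-t)) t := by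
    simpa using (hasDerivAt_neg t).exp
  exact this.hasDerivWithinAt

lemma injOn_exp_neg : InjOn (fun t : ℝ => Real.exp (-t)) (Ioi 0) :=
  (Real.exp_injective.comp neg_injective).injOn

lemma subst_exp_neg {F : Type*} [NormedAddCommGroup F] [NormedSpace ℝ F] (g : ℝ → F) :
    ∫ v in Ioo (0:ℝ) 1, g v = ∫ t in Ioi (0:ℝ), Real.exp (-t) • g (Real.exp (-t)) := by
  rw [← image_exp_neg, integral_image_eq_integral_abs_deriv_smul measurableSet_Ioi
    hasDerivWithin_exp_neg injOn_exp_neg g]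
  refine setIntegral_congr_fun measurableSet_Ioi fun t _ => ?_
  rw [abs_neg, abs_of_pos (Real.exp_pos _)]

lemma subst_exp_neg_integrableOn {F : Type*} [NormedAddCommGroup F] [NormedSpace ℝ F] (g : ℝ → F) :
    IntegrableOn g (Ioo (0:ℝ) 1) ↔
      IntegrableOn (fun t => Real.exp (-t) • g (Real.exp (-t))) (Ioi (0:ℝ)) := by
  rw [← image_exp_neg, integrableOn_image_iff_integrableOn_abs_deriv_smul measurableSet_Ioi
    hasDerivWithin_exp_neg injOn_exp_neg g]
  constructor <;> intro h <;> refine h.congr_fun (fun t _ => ?_) measurableSet_Ioi <;>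
    simp only [abs_neg, Real.abs_exp]
lemma cpow_log_integral {w p : ℂ} (hw : 0 < w.re) (hp : 0 < p.re) :
    ∫ v in Ioo (0:ℝ) 1, (v:ℂ) ^ w * ((Real.log (1/v) : ℝ) : ℂ) ^ (p - 1)
      = (1 / (w + 1)) ^ p * Complex.Gamma p := by
  rw [subst_exp_neg (fun v : ℝ => (v:ℂ) ^ w * ((Real.log (1/v) : ℝ) : ℂ) ^ (p - 1))]
  rw [show ∫ t in Ioi (0:ℝ), Real.exp (-t) •
      ((Real.exp (-t) : ℂ) ^ w * ((Real.log (1/Real.exp (-t)) : ℝ) : ℂ) ^ (p - 1))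
      = ∫ t in Ioi (0:ℝ), (t : ℂ) ^ (p - 1) * Complex.exp (-((w + 1) * t)) from ?_,
    laplace_integral_gamma hp (by simp only [add_re, one_re]; linarith)]
  refine setIntegral_congr_fun measurableSet_Ioi fun t ht => ?_
  have ht' : (0:ℝ) < t := ht
  have hlog : Real.log (1 / Real.exp (-t)) = t := by
    rw [one_div, Real.log_inv, Real.log_exp, neg_neg]
  have hbase : ((Real.exp (-t) : ℝ) : ℂ) ^ w = Complex.exp ((-t : ℝ) * w) := by
    rw [Complex.ofReal_exp, Complex.cpow_def_of_ne_zero (Complex.exp_ne_zero _),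
      Complex.log_exp (by rw [Complex.ofReal_im]; exact neg_lt_zero.mpr Real.pi_pos)
        (by rw [Complex.ofReal_im]; exact Real.pi_pos.le)]
  rw [hlog, hbase, Complex.real_smul, Complex.ofReal_exp]
  rw [show ((-t : ℝ) : ℂ) * w = -(w * t) by push_cast; ring]
  rw [show ((-t : ℝ) : ℂ) = -(t:ℂ) by push_cast; ring]
  rw [show Complex.exp (-(t:ℂ)) * (Complex.exp (-(w * (t:ℂ))) * (t:ℂ) ^ (p - 1))
      = (Complex.exp (-(t:ℂ)) * Complex.exp (-(w * (t:ℂ)))) * (t:ℂ) ^ (p - 1) by ring,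
    ← Complex.exp_add, show -(t:ℂ) + -(w * (t:ℂ)) = -((w + 1) * (t:ℂ)) by ring]
  ring

lemma rpow_log_integrableOn {w p : ℝ} (hw : 0 ≤ w) (hp : 0 < p) :
    IntegrableOn (fun v : ℝ => v ^ w * (Real.log (1/v)) ^ (p - 1)) (Ioo (0:ℝ) 1) := by
  rw [subst_exp_neg_integrableOn]
  have base : IntegrableOn (fun t : ℝ => t ^ (p - 1) * Real.exp (-((w + 1) * t))) (Ioi 0) :=
    aux_integrable_rw (by linarith) (by linarith)
  refine base.congr_fun (fun t ht => ?_) measurableSet_Ioi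
  have ht' : (0:ℝ) < t := ht
  have hlog : Real.log (1 / Real.exp (-t)) = t := by
    rw [one_div, Real.log_inv, Real.log_exp, neg_neg]
  have hbase : Real.exp (-t) ^ w = Real.exp (-t * w) := by
    rw [← Real.exp_log (Real.exp_pos (-t)), ← Real.exp_mul, Real.log_exp]
  rw [hlog, hbase, smul_eq_mul,
    show Real.exp (-t) * (Real.exp (-t * w) * t ^ (p - 1))
      = (Real.exp (-t) * Real.exp (-t * w)) * t ^ (p - 1) by ring,
    ← Real.exp_add, show -t + -t * w = -((w + 1) * t) by ring]
  ring

lemma cpow_log_integrableOn {w p : ℂ} (hw : 0 < w.re) (hp : 0 < p.re) :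
    IntegrableOn (fun v : ℝ => (v:ℂ) ^ w * ((Real.log (1/v) : ℝ) : ℂ) ^ (p - 1)) (Ioo (0:ℝ) 1) := by
  refine Integrable.mono' (rpow_log_integrableOn (w := w.re) (p := p.re) hw.le hp) ?_ ?_
  · refine (ContinuousOn.mul (fun v hv => ?_) (fun v hv => ?_)).aestronglyMeasurable
      measurableSet_Ioo
    · exact (continuousAt_ofReal_cpow_const v w (Or.inr (ne_of_gt hv.1))).continuousWithinAt
    · have hlogpos : 0 < Real.log (1 / v) :=
        Real.log_pos (by rw [lt_div_iff₀ hv.1] <;> simp [hv.2] <;> linarith [hv.2])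
      have h1 : ContinuousAt (fun v : ℝ => Real.log (1 / v)) v := by
        have := (Real.continuousAt_log (one_div_ne_zero (ne_of_gt hv.1)))
        exact this.comp ((continuousAt_const.div continuousAt_id (ne_of_gt hv.1)))
      have h2 : ContinuousAt ((fun x : ℝ => ((x : ℝ) : ℂ) ^ (p - 1)) ∘
          (fun v : ℝ => Real.log (1 / v))) v :=
        ContinuousAt.comp (f := fun v : ℝ => Real.log (1 / v)) (x := v)
          (continuousAt_ofReal_cpow_const (Real.log (1 / v)) (p - 1)
            (Or.inr (ne_of_gt hlogpos))) h1
      exact h2.continuousWithinAt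
  · filter_upwards [ae_restrict_mem measurableSet_Ioo] with v hv
    have hlogpos : 0 < Real.log (1 / v) :=
      Real.log_pos (by rw [lt_div_iff₀ hv.1] ; simpa using hv.2)
    rw [norm_mul,
      Complex.norm_cpow_eq_rpow_re_of_pos hv.1, Complex.norm_cpow_eq_rpow_re_of_pos hlogpos,
      Complex.sub_re, Complex.one_re]
lemma step1 (p q a b z : ℂ) (hq : 0 < q.re) (hb : 0 < b.re) (hz : ‖z‖ < 1)
    {u : ℝ} (hu : u ∈ Ioo (0:ℝ) 1) :
    ∫ v in Ioo (0:ℝ) 1,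
      z * ((Real.log (1 / u) : ℝ) : ℂ) ^ (p - 1) * ((Real.log (1 / v) : ℝ) : ℂ) ^ (q - 1) *
        (u : ℂ) ^ a * (v : ℂ) ^ b / (1 - (u : ℂ) * (v : ℂ) * z)
    = ∑' k : ℕ, (z ^ (k + 1) * (u:ℂ) ^ (a + (k:ℂ)) * ((Real.log (1 / u) : ℝ) : ℂ) ^ (p - 1)) *
        ((1 / (b + (k:ℂ) + 1)) ^ q * Complex.Gamma q) := by
  have hu0 : (0:ℝ) < u := hu.1
  have hu1 : u < 1 := hu.2
  set Lu : ℂ := ((Real.log (1 / u) : ℝ) : ℂ) ^ (p - 1) with hLu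
  set F : ℕ → ℝ → ℂ := fun k v =>
    (z ^ (k + 1) * (u:ℂ) ^ (a + (k:ℂ)) * Lu) *
      ((v:ℂ) ^ (b + (k:ℂ)) * ((Real.log (1 / v) : ℝ) : ℂ) ^ (q - 1)) with hF
  have hwk : ∀ k : ℕ, 0 < (b + (k:ℂ)).re := by
    intro k
    simp only [Complex.add_re, Complex.natCast_re]
    positivity
  -- pointwise expansion
  have hpt : ∀ v ∈ Ioo (0:ℝ) 1,
      z * Lu * ((Real.log (1 / v) : ℝ) : ℂ) ^ (q - 1) * (u : ℂ) ^ a * (v : ℂ) ^ b /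
        (1 - (u : ℂ) * (v : ℂ) * z) = ∑' k : ℕ, F k v := by
    intro v hv
    have hnorm : ‖(u : ℂ) * (v : ℂ) * z‖ < 1 := by
      rw [norm_mul, norm_mul,
        Complex.norm_real, Complex.norm_real, Real.norm_eq_abs, Real.norm_eq_abs, abs_of_pos hu0, abs_of_pos hv.1]
      have h0 : (0:ℝ) ≤ (1 - u * v) * ‖z‖ :=
        mul_nonneg (by nlinarith [hv.1, hv.2]) (norm_nonneg z)
      nlinarith [norm_nonneg z]
    have hgeo := tsum_geometric_of_norm_lt_one (ξ := (u : ℂ) * (v : ℂ) * z) hnorm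
    rw [div_eq_mul_inv, ← hgeo, ← tsum_mul_left]
    refine tsum_congr fun k => ?_
    have hcu : (u:ℂ) ^ (a + (k:ℂ)) = (u:ℂ) ^ a * (u:ℂ) ^ k := by
      rw [Complex.cpow_add _ _ (by exact_mod_cast hu0.ne'), Complex.cpow_natCast]
    have hcv : (v:ℂ) ^ (b + (k:ℂ)) = (v:ℂ) ^ b * (v:ℂ) ^ k := by
      rw [Complex.cpow_add _ _ (by exact_mod_cast hv.1.ne'), Complex.cpow_natCast]
    simp only [hF, hcu, hcv, mul_pow, pow_succ]
    ring
  rw [setIntegral_congr_fun measurableSet_Ioo hpt]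
  -- integrability of each term
  have hFint : ∀ k : ℕ, IntegrableOn (F k) (Ioo (0:ℝ) 1) := by
    intro k
    exact (cpow_log_integrableOn (hwk k) hq).const_mul _
  -- summability of integrals of norms
  have hnormint : Summable fun k : ℕ => ∫ v in Ioo (0:ℝ) 1, ‖F k v‖ := by
    set B : ℝ := ∫ v in Ioo (0:ℝ) 1, v ^ b.re * (Real.log (1 / v)) ^ (q.re - 1) with hB
    set D : ℝ := ‖z‖ * (u ^ a.re * ‖Lu‖) with hD
    refine Summable.of_nonneg_of_le (fun k => integral_nonneg fun v => norm_nonneg _)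
      (fun k => ?_) (((summable_geometric_of_lt_one (norm_nonneg z) hz).mul_left (D * B)))
    have hcalc : ∫ v in Ioo (0:ℝ) 1, ‖F k v‖
        = ‖z ^ (k + 1) * (u:ℂ) ^ (a + (k:ℂ)) * Lu‖ *
          ∫ v in Ioo (0:ℝ) 1, ‖(v:ℂ) ^ (b + (k:ℂ)) * ((Real.log (1 / v) : ℝ) : ℂ) ^ (q - 1)‖ := by
      rw [← integral_const_mul]
      exact setIntegral_congr_fun measurableSet_Ioo fun v hv => by rw [hF]; exact norm_mul _ _
    rw [hcalc]
    have hle1 : ∫ v in Ioo (0:ℝ) 1,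
        ‖(v:ℂ) ^ (b + (k:ℂ)) * ((Real.log (1 / v) : ℝ) : ℂ) ^ (q - 1)‖ ≤ B := by
      rw [hB]
      have heqn : ∀ v ∈ Ioo (0:ℝ) 1,
          ‖(v:ℂ) ^ (b + (k:ℂ)) * ((Real.log (1 / v) : ℝ) : ℂ) ^ (q - 1)‖
          = v ^ (b.re + k) * (Real.log (1 / v)) ^ (q.re - 1) := by
        intro v hv
        have hlogpos : 0 < Real.log (1 / v) :=
          Real.log_pos (by rw [lt_div_iff₀ hv.1]; simpa using hv.2)
        rw [norm_mul,
          Complex.norm_cpow_eq_rpow_re_of_pos hv.1, Complex.norm_cpow_eq_rpow_re_of_pos hlogpos,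
          Complex.sub_re, Complex.one_re, Complex.add_re, Complex.natCast_re]
      rw [setIntegral_congr_fun measurableSet_Ioo heqn]
      refine setIntegral_mono_on (rpow_log_integrableOn (w := b.re + (k:ℝ)) (by positivity) hq)
        (rpow_log_integrableOn hb.le hq) measurableSet_Ioo fun v hv => ?_
      have hlogpos : 0 < Real.log (1 / v) :=
        Real.log_pos (by rw [lt_div_iff₀ hv.1]; simpa using hv.2)
      have : v ^ (b.re + (k:ℝ)) ≤ v ^ b.re :=
        Real.rpow_le_rpow_of_exponent_ge hv.1 hv.2.le (le_add_of_nonneg_right (by positivity))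
      exact mul_le_mul_of_nonneg_right this (Real.rpow_nonneg hlogpos.le _)
    have hle2 : ‖z ^ (k + 1) * (u:ℂ) ^ (a + (k:ℂ)) * Lu‖ ≤ D * ‖z‖ ^ k := by
      rw [norm_mul, norm_mul,
        norm_pow, Complex.norm_cpow_eq_rpow_re_of_pos hu0, hD]
      have h1 : u ^ (a + (k:ℂ)).re ≤ u ^ a.re := by
        refine Real.rpow_le_rpow_of_exponent_ge hu0 hu1.le ?_
        simp only [Complex.add_re, Complex.natCast_re]
        exact le_add_of_nonneg_right (by positivity)
      calc ‖z‖ ^ (k + 1) * u ^ (a + (k:ℂ)).re * ‖Lu‖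
          = (‖z‖ * ‖z‖ ^ k) * (u ^ (a + (k:ℂ)).re * ‖Lu‖) := by
            ring
        _ ≤ (‖z‖ * ‖z‖ ^ k) * (u ^ a.re * ‖Lu‖) :=
            mul_le_mul_of_nonneg_left
              (mul_le_mul_of_nonneg_right h1 (norm_nonneg Lu))
              (mul_nonneg (norm_nonneg z) (pow_nonneg (norm_nonneg z) k))
        _ = D * ‖z‖ ^ k := by rw [hD]; ring
    have hBnn : 0 ≤ B := by
      rw [hB]
      refine setIntegral_nonneg measurableSet_Ioo fun v hv => ?_
      have hv0 : (0:ℝ) < v := hv.1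
      have hlogpos : 0 < Real.log (1 / v) :=
        Real.log_pos (by rw [lt_div_iff₀ hv0]; simpa using hv.2)
      positivity
    have hint_nn : 0 ≤ ∫ v in Ioo (0:ℝ) 1,
        ‖(v:ℂ) ^ (b + (k:ℂ)) * ((Real.log (1 / v) : ℝ) : ℂ) ^ (q - 1)‖ :=
      integral_nonneg fun v => norm_nonneg _
    calc ‖z ^ (k + 1) * (u:ℂ) ^ (a + (k:ℂ)) * Lu‖ * ∫ v in Ioo (0:ℝ) 1,
          ‖(v:ℂ) ^ (b + (k:ℂ)) * ((Real.log (1 / v) : ℝ) : ℂ) ^ (q - 1)‖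
        ≤ (D * ‖z‖ ^ k) * B := by
          apply mul_le_mul hle2 hle1 hint_nn
          rw [hD]
          exact mul_nonneg (mul_nonneg (norm_nonneg z)
            (mul_nonneg (Real.rpow_nonneg hu0.le _) (norm_nonneg Lu)))
            (pow_nonneg (norm_nonneg z) k)
      _ = D * B * ‖z‖ ^ k := by ring
  rw [← integral_tsum_of_summable_integral_norm hFint hnormint]
  refine tsum_congr fun k => ?_
  rw [hF]
  simp only
  rw [integral_const_mul, cpow_log_integral (hwk k) hq]
lemma abs_one_div_cpow_le {w s : ℂ} (hw : 1 ≤ w.re) (hs : 0 ≤ s.re) :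
    ‖(1 / w) ^ s‖ ≤ Real.exp (Real.pi * |s.im|) := by
  have habs : 1 ≤ ‖w‖ := le_trans hw (Complex.re_le_norm w)
  have h1 : ‖1 / w‖ ≤ 1 := by
    rw [norm_div, norm_one, div_le_one (by linarith)]
    exact habs
  calc ‖(1 / w) ^ s‖
      ≤ ‖1 / w‖ ^ s.re / Real.exp ((1 / w).arg * s.im) := Complex.norm_cpow_le _ _
    _ ≤ 1 / Real.exp (-(Real.pi * |s.im|)) := by
        refine div_le_div₀ zero_le_one
          (Real.rpow_le_one (norm_nonneg _) h1 hs) (Real.exp_pos _)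
          (Real.exp_le_exp.2 ?_)
        have h2 : |(1 / w).arg * s.im| ≤ Real.pi * |s.im| := by
          rw [abs_mul]
          exact mul_le_mul_of_nonneg_right (Complex.abs_arg_le_pi _) (abs_nonneg _)
        linarith [neg_abs_le ((1 / w).arg * s.im)]
    _ = Real.exp (Real.pi * |s.im|) := by
        rw [Real.exp_neg, one_div, inv_inv]

lemma norm_cpow_log_integral_le {w s : ℂ} (hw : 0 < w.re) (hs : 0 < s.re) (k : ℕ) :
    (∫ v in Ioo (0:ℝ) 1, ‖(v:ℂ) ^ (w + (k:ℂ)) * ((Real.log (1 / v) : ℝ) : ℂ) ^ (s - 1)‖)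
      ≤ ∫ v in Ioo (0:ℝ) 1, v ^ w.re * (Real.log (1 / v)) ^ (s.re - 1) := by
  have heqn : ∀ v ∈ Ioo (0:ℝ) 1,
      ‖(v:ℂ) ^ (w + (k:ℂ)) * ((Real.log (1 / v) : ℝ) : ℂ) ^ (s - 1)‖
      = v ^ (w.re + k) * (Real.log (1 / v)) ^ (s.re - 1) := by
    intro v hv
    have hlogpos : 0 < Real.log (1 / v) :=
      Real.log_pos (by rw [lt_div_iff₀ hv.1]; simpa using hv.2)
    rw [norm_mul,
      Complex.norm_cpow_eq_rpow_re_of_pos hv.1, Complex.norm_cpow_eq_rpow_re_of_pos hlogpos,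
      Complex.sub_re, Complex.one_re, Complex.add_re, Complex.natCast_re]
  rw [setIntegral_congr_fun measurableSet_Ioo heqn]
  refine setIntegral_mono_on (rpow_log_integrableOn (w := w.re + (k:ℝ)) (by positivity) hs)
    (rpow_log_integrableOn hw.le hs) measurableSet_Ioo fun v hv => ?_
  have hlogpos : 0 < Real.log (1 / v) :=
    Real.log_pos (by rw [lt_div_iff₀ hv.1]; simpa using hv.2)
  have h1 : v ^ (w.re + (k:ℝ)) ≤ v ^ w.re :=
    Real.rpow_le_rpow_of_exponent_ge hv.1 hv.2.le (le_add_of_nonneg_right (by positivity))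
  exact mul_le_mul_of_nonneg_right h1 (Real.rpow_nonneg hlogpos.le _)

theorem generalized_polylog_double_integral_unit_square
    (p q a b : ℂ) (hp : 0 < p.re) (hq : 0 < q.re) (ha : 0 < a.re) (hb : 0 < b.re) :
    ∀ z : ℂ, ‖z‖ < 1 →
      genPolylogC p q a b z =
        ((1 + a) ^ p * (1 + b) ^ q / (Complex.Gamma p * Complex.Gamma q)) *
          ∫ u in Set.Ioo (0 : ℝ) 1, ∫ v in Set.Ioo (0 : ℝ) 1,
            z * ((Real.log (1 / u) : ℂ) ^ (p - 1)) * ((Real.log (1 / v) : ℂ) ^ (q - 1)) *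
              (u : ℂ) ^ a * (v : ℂ) ^ b / (1 - (u : ℂ) * (v : ℂ) * z) := by
  intro z hz
  have hΓp : Complex.Gamma p ≠ 0 := by
    refine Complex.Gamma_ne_zero fun m h => ?_
    rw [h] at hp
    simp only [Complex.neg_re, Complex.natCast_re] at hp
    have : (0:ℝ) ≤ (m:ℝ) := Nat.cast_nonneg m
    linarith
  have hΓq : Complex.Gamma q ≠ 0 := by
    refine Complex.Gamma_ne_zero fun m h => ?_
    rw [h] at hq
    simp only [Complex.neg_re, Complex.natCast_re] at hq
    have : (0:ℝ) ≤ (m:ℝ) := Nat.cast_nonneg m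
    linarith
  set G : ℕ → ℝ → ℂ := fun k u =>
    (z ^ (k + 1) * ((1 / (b + (k:ℂ) + 1)) ^ q * Complex.Gamma q)) *
      ((u:ℂ) ^ (a + (k:ℂ)) * ((Real.log (1 / u) : ℝ) : ℂ) ^ (p - 1)) with hG
  have hak : ∀ k : ℕ, 0 < (a + (k:ℂ)).re := by
    intro k
    simp only [Complex.add_re, Complex.natCast_re]
    positivity
  -- rewrite the inner integral via step1
  have houter : ∀ u ∈ Ioo (0:ℝ) 1,
      (∫ v in Ioo (0:ℝ) 1,
        z * ((Real.log (1 / u) : ℝ) : ℂ) ^ (p - 1) * ((Real.log (1 / v) : ℝ) : ℂ) ^ (q - 1) *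
          (u : ℂ) ^ a * (v : ℂ) ^ b / (1 - (u : ℂ) * (v : ℂ) * z)) = ∑' k : ℕ, G k u := by
    intro u hu
    rw [step1 p q a b z hq hb hz hu]
    exact tsum_congr fun k => by rw [hG]; ring
  rw [setIntegral_congr_fun measurableSet_Ioo houter]
  have hGint : ∀ k : ℕ, IntegrableOn (G k) (Ioo (0:ℝ) 1) :=
    fun k => (cpow_log_integrableOn (hak k) hp).const_mul _
  have hGnorm : Summable fun k : ℕ => ∫ u in Ioo (0:ℝ) 1, ‖G k u‖ := by
    set B : ℝ := ∫ u in Ioo (0:ℝ) 1, u ^ a.re * (Real.log (1 / u)) ^ (p.re - 1) with hB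
    set E : ℝ := Real.exp (Real.pi * |q.im|) * ‖Complex.Gamma q‖ with hE
    have hBnn : 0 ≤ B := by
      rw [hB]
      refine setIntegral_nonneg measurableSet_Ioo fun u hu => ?_
      have hu0 : (0:ℝ) < u := hu.1
      have hlogpos : 0 < Real.log (1 / u) :=
        Real.log_pos (by rw [lt_div_iff₀ hu0]; simpa using hu.2)
      positivity
    refine Summable.of_nonneg_of_le (fun k => integral_nonneg fun u => norm_nonneg _)
      (fun k => ?_)
      (((summable_geometric_of_lt_one (norm_nonneg z) hz).mul_left
        (‖z‖ * E * B)))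
    have hcalc : ∫ u in Ioo (0:ℝ) 1, ‖G k u‖
        = ‖z ^ (k + 1) * ((1 / (b + (k:ℂ) + 1)) ^ q * Complex.Gamma q)‖ *
          ∫ u in Ioo (0:ℝ) 1, ‖(u:ℂ) ^ (a + (k:ℂ)) * ((Real.log (1 / u) : ℝ) : ℂ) ^ (p - 1)‖ := by
      rw [← integral_const_mul]
      exact setIntegral_congr_fun measurableSet_Ioo fun u hu => by rw [hG]; exact norm_mul _ _
    rw [hcalc]
    have hle2 : ‖z ^ (k + 1) * ((1 / (b + (k:ℂ) + 1)) ^ q * Complex.Gamma q)‖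
        ≤ ‖z‖ * E * ‖z‖ ^ k := by
      rw [norm_mul, norm_mul,
        norm_pow]
      have h1 : ‖(1 / (b + (k:ℂ) + 1)) ^ q‖ ≤ Real.exp (Real.pi * |q.im|) := by
        refine abs_one_div_cpow_le ?_ hq.le
        simp only [Complex.add_re, Complex.natCast_re, Complex.one_re]
        linarith [Nat.cast_nonneg (α := ℝ) k]
      calc ‖z‖ ^ (k + 1) *
            (‖(1 / (b + (k:ℂ) + 1)) ^ q‖ * ‖Complex.Gamma q‖)
          ≤ ‖z‖ ^ (k + 1) *
            (Real.exp (Real.pi * |q.im|) * ‖Complex.Gamma q‖) := by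
            refine mul_le_mul_of_nonneg_left
              (mul_le_mul_of_nonneg_right h1 (norm_nonneg _))
              (pow_nonneg (norm_nonneg z) _)
        _ = ‖z‖ * E * ‖z‖ ^ k := by rw [hE]; ring
    have hle1 := norm_cpow_log_integral_le ha hp k
    have hint_nn : 0 ≤ ∫ u in Ioo (0:ℝ) 1,
        ‖(u:ℂ) ^ (a + (k:ℂ)) * ((Real.log (1 / u) : ℝ) : ℂ) ^ (p - 1)‖ :=
      integral_nonneg fun u => norm_nonneg _
    calc ‖z ^ (k + 1) * ((1 / (b + (k:ℂ) + 1)) ^ q * Complex.Gamma q)‖ *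
          ∫ u in Ioo (0:ℝ) 1, ‖(u:ℂ) ^ (a + (k:ℂ)) * ((Real.log (1 / u) : ℝ) : ℂ) ^ (p - 1)‖
        ≤ (‖z‖ * E * ‖z‖ ^ k) * B := by
          refine mul_le_mul hle2 hle1 hint_nn ?_
          rw [hE]
          have := Real.exp_pos (Real.pi * |q.im|)
          have h3 : (0:ℝ) ≤ ‖Complex.Gamma q‖ := norm_nonneg _
          have h4 : (0:ℝ) ≤ ‖z‖ := norm_nonneg z
          have h5 : (0:ℝ) ≤ ‖z‖ ^ k := pow_nonneg h4 k
          exact mul_nonneg (mul_nonneg h4 (mul_nonneg this.le h3)) h5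
      _ = ‖z‖ * E * B * ‖z‖ ^ k := by ring
  rw [← integral_tsum_of_summable_integral_norm hGint hGnorm]
  have hGval : ∀ k : ℕ, (∫ u in Ioo (0:ℝ) 1, G k u)
      = (z ^ (k + 1) * ((1 / (b + (k:ℂ) + 1)) ^ q * Complex.Gamma q)) *
        ((1 / (a + (k:ℂ) + 1)) ^ p * Complex.Gamma p) := by
    intro k
    rw [hG]
    simp only
    rw [integral_const_mul, cpow_log_integral (hak k) hp]
  rw [tsum_congr hGval, ← tsum_mul_left]
  rw [genPolylogC]
  refine tsum_congr fun k => ?_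
  have hane : ((k:ℂ) + 1 + a) ≠ 0 := by
    intro h
    have := congrArg Complex.re h
    simp only [Complex.add_re, Complex.natCast_re, Complex.one_re, Complex.zero_re] at this
    have : (0:ℝ) ≤ (k:ℝ) := Nat.cast_nonneg k
    linarith
  have hbne : ((k:ℂ) + 1 + b) ≠ 0 := by
    intro h
    have := congrArg Complex.re h
    simp only [Complex.add_re, Complex.natCast_re, Complex.one_re, Complex.zero_re] at this
    have : (0:ℝ) ≤ (k:ℝ) := Nat.cast_nonneg k
    linarith
  have hargA : ((k:ℂ) + 1 + a).arg ≠ Real.pi := by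
    rw [Ne, Complex.arg_eq_pi_iff]
    rintro ⟨h1, -⟩
    simp only [Complex.add_re, Complex.natCast_re, Complex.one_re] at h1
    have : (0:ℝ) ≤ (k:ℝ) := Nat.cast_nonneg k
    linarith
  have hargB : ((k:ℂ) + 1 + b).arg ≠ Real.pi := by
    rw [Ne, Complex.arg_eq_pi_iff]
    rintro ⟨h1, -⟩
    simp only [Complex.add_re, Complex.natCast_re, Complex.one_re] at h1
    have : (0:ℝ) ≤ (k:ℝ) := Nat.cast_nonneg k
    linarith
  have hApow : (((k:ℂ) + 1 + a) ^ p) ≠ 0 := by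
    simp [Complex.cpow_eq_zero_iff, hane]
  have hBpow : (((k:ℂ) + 1 + b) ^ q) ≠ 0 := by
    simp [Complex.cpow_eq_zero_iff, hbne]
  rw [show a + (k:ℂ) + 1 = (k:ℂ) + 1 + a by ring, show b + (k:ℂ) + 1 = (k:ℂ) + 1 + b by ring,
    one_div, one_div, Complex.inv_cpow _ _ hargA, Complex.inv_cpow _ _ hargB]
  field_simp
end

section
/- Let a be a real number with a > 0 and let s be a complex number with Re(s) > 0. Then for every complex z with |z| < 1, Σ_{n=0}^∞ z^n/(n+a)^s = 1/a^s + (z/Γ(s)) ∫_0^1 (log(1/t))^{s−1} t^a/(1−zt) dt. -/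
open MeasureTheory

open Set Real Complex in
private lemma lerch_aux_mellin_eq (a : ℝ) (s : ℂ) (z : ℂ) :
    mellin (fun t => z * rexp (-((a+1)*t)) / (1 - z * rexp (-t))) s
      = z * ∫ t in Set.Ioo (0 : ℝ) 1,
          ((Real.log (1 / t) : ℂ)) ^ (s - 1) * (t : ℂ) ^ (a : ℂ) / (1 - z * (t : ℂ)) := by
  have himg : (fun x : ℝ => rexp (-x)) '' Ioi 0 = Ioo 0 1 := by
    ext y
    simp only [mem_image, mem_Ioi, mem_Ioo]
    constructor
    · rintro ⟨x, hx, rfl⟩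
      exact ⟨exp_pos _, by rwa [exp_lt_one_iff, neg_lt_zero]⟩
    · rintro ⟨h0, h1⟩
      exact ⟨-Real.log y, by simpa using Real.log_neg h0 h1, by rw [neg_neg, Real.exp_log h0]⟩
  have hderiv : ∀ x ∈ Ioi (0:ℝ), HasDerivWithinAt (fun x : ℝ => rexp (-x)) (-rexp (-x)) (Ioi 0) x :=
    fun x _ => by simpa [Function.comp_def] using ((Real.hasDerivAt_exp (-x)).comp x (hasDerivAt_neg x)).hasDerivWithinAt
  have hinj : Set.InjOn (fun x : ℝ => rexp (-x)) (Ioi 0) :=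
    fun _ _ _ _ h => neg_injective (Real.exp_injective h)
  rw [← himg, integral_image_eq_integral_abs_deriv_smul measurableSet_Ioi hderiv hinj, mellin,
    ← integral_const_mul]
  refine setIntegral_congr_fun measurableSet_Ioi (fun x hx => ?_)
  have hlog : Real.log (1 / rexp (-x)) = x := by
    rw [one_div, ← Real.exp_neg, neg_neg, Real.log_exp]
  have hcpow : ((rexp (-x) : ℝ) : ℂ) ^ (a : ℂ) = ((rexp (-x * a) : ℝ) : ℂ) := by
    rw [← Complex.ofReal_cpow (Real.exp_pos _).le, Real.exp_mul]
  simp only [abs_neg, abs_of_pos (Real.exp_pos _), smul_eq_mul, real_smul, hlog, hcpow]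
  have hexp : (rexp (-x) : ℂ) * (rexp (-x * a) : ℝ) = (rexp (-((a+1)*x)) : ℝ) := by
    rw [← Complex.ofReal_mul, ← Real.exp_add]
    norm_num
    ring_nf
  rw [← hexp]
  push_cast
  ring

open Set Real Complex in
private lemma lerch_aux_hasSum (a : ℝ) (ha : 0 < a) (s : ℂ) (hs : 0 < s.re)
    (z : ℂ) (hz : ‖z‖ < 1) :
    HasSum (fun i : ℕ => Complex.Gamma s * z ^ (i+1) / (((i:ℝ) + 1 + a : ℝ) : ℂ) ^ s)
      (mellin (fun t => z * rexp (-((a+1)*t)) / (1 - z * rexp (-t))) s) := by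
  have hp : ∀ i : ℕ, z ^ (i+1) = 0 ∨ 0 < (i:ℝ) + 1 + a := fun i => Or.inr (by positivity)
  have hF : ∀ t ∈ Ioi (0:ℝ), HasSum (fun i : ℕ => z ^ (i+1) * rexp (-((i:ℝ) + 1 + a) * t))
      (z * rexp (-((a+1)*t)) / (1 - z * rexp (-t))) := by
    intro t ht
    have hlt : ‖z * rexp (-t)‖ < 1 := by
      rw [norm_mul, Complex.norm_real, Real.norm_eq_abs, abs_of_pos (exp_pos _)]
      calc ‖z‖ * rexp (-t) ≤ ‖z‖ * 1 := by
            exact mul_le_mul_of_nonneg_left (by rw [exp_le_one_iff]; linarith [mem_Ioi.mp ht])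
              (norm_nonneg _)
        _ < 1 := by simpa using hz
    have hgeo := (hasSum_geometric_of_norm_lt_one hlt).mul_left (z * rexp (-((a+1)*t)))
    rw [← div_eq_mul_inv] at hgeo
    convert hgeo using 2 with i
    · rfl
    rw [mul_pow, ← Complex.ofReal_pow, ← Real.exp_nat_mul]
    rw [show (-(((i:ℝ) + 1 + a)) * t) = (-((a+1)*t)) + ((i:ℝ) * -t) by ring, Real.exp_add]
    push_cast
    ring
  have h_sum : Summable fun i : ℕ => ‖z ^ (i+1)‖ / ((i:ℝ) + 1 + a) ^ s.re := by
    refine Summable.of_nonneg_of_le (g := fun i : ℕ => ‖z ^ (i+1)‖ / ((i:ℝ) + 1 + a) ^ s.re)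
      (f := fun i : ℕ => (a ^ s.re)⁻¹ * ‖z‖ ^ (i+1))
      (fun i => by positivity) (fun i => ?_) ?_
    swap
    · exact Summable.congr ((summable_geometric_of_lt_one (norm_nonneg z) hz).mul_left
        ((a ^ s.re)⁻¹ * ‖z‖)) (fun i => by rw [pow_succ]; ring)
    · rw [norm_pow, div_eq_inv_mul]
      apply mul_le_mul_of_nonneg_right _ (by positivity)
      rw [inv_le_inv₀ (by positivity) (by positivity)]
      exact Real.rpow_le_rpow ha.le (by linarith [Nat.cast_nonneg (α := ℝ) i]) hs.le
  exact hasSum_mellin hp hs hF h_sum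

theorem lerch_transcendent_basic_integral_representation
    (a : ℝ) (ha : 0 < a) (s : ℂ) (hs : 0 < s.re) :
    ∀ z : ℂ, ‖z‖ < 1 →
      ∑' n : ℕ, z ^ n / (((n : ℝ) + a : ℝ) : ℂ) ^ s =
        1 / ((a : ℂ) ^ s) +
          (z / Complex.Gamma s) *
            ∫ t in Set.Ioo (0 : ℝ) 1,
              ((Real.log (1 / t) : ℂ)) ^ (s - 1) * (t : ℂ) ^ (a : ℂ) / (1 - z * (t : ℂ)) := by
  intro z hz
  have hΓ : Complex.Gamma s ≠ 0 := Complex.Gamma_ne_zero_of_re_pos hs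
  set I : ℂ := ∫ t in Set.Ioo (0 : ℝ) 1,
      ((Real.log (1 / t) : ℂ)) ^ (s - 1) * (t : ℂ) ^ (a : ℂ) / (1 - z * (t : ℂ)) with hI
  set f : ℕ → ℂ := fun n => z ^ n / (((n : ℝ) + a : ℝ) : ℂ) ^ s with hf
  have hM := lerch_aux_hasSum a ha s hs z hz
  rw [lerch_aux_mellin_eq a s z, ← hI] at hM
  have hM' : HasSum (fun i : ℕ => Complex.Gamma s * f (i+1)) (z * I) := by
    refine hM.congr_fun (fun i => ?_)
    simp only [hf]
    push_cast
    ring_nf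
  have hM'' : HasSum (fun n : ℕ => Complex.Gamma s * f n)
      (z * I + ∑ i ∈ Finset.range 1, Complex.Gamma s * f i) := by
    exact (hasSum_nat_add_iff 1).mp hM'
  have hf0 : f 0 = 1 / ((a : ℂ) ^ s) := by
    simp [hf]
  have hsum : HasSum f ((z * I + Complex.Gamma s * f 0) / Complex.Gamma s) := by
    simpa using hM''.div_const (Complex.Gamma s) |>.congr_fun
      (fun n => by field_simp)
  rw [hsum.tsum_eq, hf0]
  field_simp
  ring
end
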